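/- Let f : ℕ⁺ → ℂ be a multiplicative function. Then for every positive integer n, Σ_{lcm(a,b)=n} μ(a) f(a) = ∏_{p : p² ∣ n} (1 - f(p)) · ∏_{p : p ∥ n} (1 - 2 f(p)), where the first product is over primes p whose square divides n and the second over primes p exactly dividing n (p ∣ n but p² ∤ n), and μ is the Möbius function. In particular, if n is a perfect square, then Σ_{d ∣ n} μ(d) f(d) = Σ_{lcm(a,b)=n} μ(a) f(a). -/

import Mathlib

open Finset ArithmeticFunction

namespace LcmConvAux

/-- `f` bundled as an arithmetic function. -/
noncomputable def Ff (f : ℕ → ℂ) : ArithmeticFunction ℂ :=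
  ⟨fun n => if n = 0 then 0 else f n, by simp⟩

@[simp] theorem Ff_apply (f : ℕ → ℂ) {n : ℕ} (hn : n ≠ 0) : Ff f n = f n := if_neg hn

theorem Ff_mult (f : ℕ → ℂ) (hf1 : f 1 = 1)
    (hmul : ∀ a b : ℕ, Nat.Coprime a b → f (a * b) = f a * f b) :
    (Ff f).IsMultiplicative := by
  rw [ArithmeticFunction.IsMultiplicative.iff_ne_zero]
  refine ⟨by simpa using hf1, fun {m n} hm hn cop => ?_⟩
  rw [Ff_apply _ (Nat.mul_ne_zero hm hn), Ff_apply _ hm, Ff_apply _ hn, hmul m n cop]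

/-- `G(n) = Σ_{d|n} μ(d) f(d)` as an arithmetic function. -/
noncomputable def Gf (f : ℕ → ℂ) : ArithmeticFunction ℂ :=
  (ArithmeticFunction.pmul ((moebius : ArithmeticFunction ℤ) : ArithmeticFunction ℂ) (Ff f)) *
    ((zeta : ArithmeticFunction ℕ) : ArithmeticFunction ℂ)

/-- The lcm-pair sum as an arithmetic function. -/
noncomputable def Slcm (f : ℕ → ℂ) : ArithmeticFunction ℂ :=
  ⟨fun n => ∑ x ∈ (n.divisors ×ˢ n.divisors).filter (fun x => Nat.lcm x.1 x.2 = n),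
      ((ArithmeticFunction.moebius x.1 : ℤ) : ℂ) * f x.1, by simp⟩

@[simp] theorem Slcm_apply (f : ℕ → ℂ) (n : ℕ) :
    Slcm f n = ∑ x ∈ (n.divisors ×ˢ n.divisors).filter (fun x => Nat.lcm x.1 x.2 = n),
      ((ArithmeticFunction.moebius x.1 : ℤ) : ℂ) * f x.1 := rfl

theorem zeta_mul_Slcm (f : ℕ → ℂ) :
    ((zeta : ArithmeticFunction ℕ) : ArithmeticFunction ℂ) * Slcm f =
      (Gf f).pmul ((sigma 0 : ArithmeticFunction ℕ) : ArithmeticFunction ℂ) := by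
  ext n
  rcases eq_or_ne n 0 with rfl | hn
  · simp
  rw [coe_zeta_mul_apply, pmul_apply, Gf, coe_mul_zeta_apply, natCoe_apply, sigma_zero_apply]
  have h1 : ∀ d ∈ n.divisors, Slcm f d =
      ∑ x ∈ (n.divisors ×ˢ n.divisors).filter (fun x => Nat.lcm x.1 x.2 = d),
        ((ArithmeticFunction.moebius x.1 : ℤ) : ℂ) * f x.1 := by
    intro d hd
    rw [Nat.mem_divisors] at hd
    have hd0 : d ≠ 0 := fun h => hd.2 (Nat.eq_zero_of_zero_dvd (h ▸ hd.1))
    rw [Slcm_apply]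
    apply Finset.sum_congr _ (fun _ _ => rfl)
    ext ⟨a, b⟩
    simp only [mem_filter, mem_product, Nat.mem_divisors]
    constructor
    · rintro ⟨⟨⟨ha, _⟩, ⟨hb, _⟩⟩, hl⟩
      exact ⟨⟨⟨ha.trans hd.1, hd.2⟩, hb.trans hd.1, hd.2⟩, hl⟩
    · rintro ⟨⟨⟨ha, _⟩, ⟨hb, _⟩⟩, hl⟩
      exact ⟨⟨⟨hl ▸ Nat.dvd_lcm_left a b, hd0⟩, hl ▸ Nat.dvd_lcm_right a b, hd0⟩, hl⟩
  have hmap : ∀ x ∈ n.divisors ×ˢ n.divisors, Nat.lcm x.1 x.2 ∈ n.divisors := by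
    intro x hx
    rw [Finset.mem_product, Nat.mem_divisors, Nat.mem_divisors] at hx
    exact Nat.mem_divisors.mpr ⟨Nat.lcm_dvd hx.1.1 hx.2.1, hn⟩
  have h2 := Finset.sum_fiberwise_of_maps_to hmap
    (fun x : ℕ × ℕ => ((ArithmeticFunction.moebius x.1 : ℤ) : ℂ) * f x.1)
  rw [Finset.sum_congr rfl h1, h2]
  rw [Finset.sum_product]
  simp only [Finset.sum_const, nsmul_eq_mul]
  rw [← Finset.mul_sum, mul_comm]
  congr 1
  refine Finset.sum_congr rfl (fun i hi => ?_)
  rw [Nat.mem_divisors] at hi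
  have hi0 : i ≠ 0 := fun h => hn (Nat.eq_zero_of_zero_dvd (h ▸ hi.1))
  rw [pmul_apply, intCoe_apply, Ff_apply _ hi0]

theorem Slcm_eq (f : ℕ → ℂ) :
    Slcm f = ((moebius : ArithmeticFunction ℤ) : ArithmeticFunction ℂ) *
      ((Gf f).pmul ((sigma 0 : ArithmeticFunction ℕ) : ArithmeticFunction ℂ)) := by
  rw [← zeta_mul_Slcm, ← mul_assoc, coe_moebius_mul_coe_zeta, one_mul]

theorem Slcm_mult (f : ℕ → ℂ) (hf1 : f 1 = 1)
    (hmul : ∀ a b : ℕ, Nat.Coprime a b → f (a * b) = f a * f b) :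
    (Slcm f).IsMultiplicative := by
  rw [Slcm_eq]
  exact isMultiplicative_moebius.intCast.mul
    (((isMultiplicative_moebius.intCast.pmul (Ff_mult f hf1 hmul)).mul
      isMultiplicative_zeta.natCast).pmul isMultiplicative_sigma.natCast)

theorem Gf_prime_pow (f : ℕ → ℂ) (hf1 : f 1 = 1) {p : ℕ} (hp : p.Prime) (k : ℕ) :
    Gf f (p ^ k) = if k = 0 then 1 else 1 - f p := by
  rw [Gf, coe_mul_zeta_apply, Nat.sum_divisors_prime_pow hp]
  rcases k with _ | s
  · simp [hf1, pmul_apply]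
  · rw [Finset.sum_range_succ']
    have h0 : ((ArithmeticFunction.moebius : ArithmeticFunction ℤ) :
        ArithmeticFunction ℂ).pmul (Ff f) (p ^ 0) = 1 := by
      simp [hf1, pmul_apply]
    rw [h0]
    have hterm : ∀ i, (((moebius : ArithmeticFunction ℤ) : ArithmeticFunction ℂ)).pmul (Ff f)
        (p ^ (i + 1)) = if i = 0 then -f p else 0 := by
      intro i
      rw [pmul_apply, intCoe_apply, moebius_apply_prime_pow hp (Nat.succ_ne_zero i),
        Ff_apply _ (pow_ne_zero _ hp.pos.ne')]
      rcases eq_or_ne i 0 with rfl | hi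
      · simp
      · simp [Nat.succ_ne_succ.mpr hi, hi]
    simp only [hterm]
    rw [Finset.sum_ite_eq' (Finset.range (s + 1)) 0 (fun _ => -f p),
      if_pos (Finset.mem_range.mpr s.succ_pos)]
    simp
    ring

theorem Slcm_prime_pow (f : ℕ → ℂ) (hf1 : f 1 = 1) {p : ℕ} (hp : p.Prime) {k : ℕ} (hk : k ≠ 0) :
    Slcm f (p ^ k) = if 2 ≤ k then 1 - f p else 1 - 2 * f p := by
  have hT : ∀ j : ℕ, ((Gf f).pmul ((sigma 0 : ArithmeticFunction ℕ) : ArithmeticFunction ℂ))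
      (p ^ j) = (if j = 0 then 1 else 1 - f p) * (j + 1) := by
    intro j
    rw [pmul_apply, Gf_prime_pow f hf1 hp, natCoe_apply, sigma_zero_apply_prime_pow hp]
    push_cast
    ring
  rw [Slcm_eq, mul_apply, Nat.sum_divisorsAntidiagonal
    (fun i j => ((moebius : ArithmeticFunction ℤ) : ArithmeticFunction ℂ) i *
      ((Gf f).pmul ((sigma 0 : ArithmeticFunction ℕ) : ArithmeticFunction ℂ)) j),
    Nat.sum_divisors_prime_pow hp]
  have hdiv : ∀ i ∈ Finset.range (k + 1), p ^ k / p ^ i = p ^ (k - i) := by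
    intro i hi
    rw [Nat.pow_div (Nat.lt_succ_iff.mp (Finset.mem_range.mp hi)) hp.pos]
  rw [Finset.sum_congr rfl (fun i hi => by rw [hdiv i hi])]
  obtain ⟨s, rfl⟩ : ∃ s, k = s + 1 := ⟨k - 1, (Nat.succ_pred_eq_of_ne_zero hk).symm⟩
  rw [Finset.sum_range_succ']
  have hterm : ∀ i, ((moebius : ArithmeticFunction ℤ) : ArithmeticFunction ℂ) (p ^ (i + 1)) *
      ((Gf f).pmul ((sigma 0 : ArithmeticFunction ℕ) : ArithmeticFunction ℂ))
        (p ^ (s + 1 - (i + 1))) =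
      if i = 0 then -(((Gf f).pmul ((sigma 0 : ArithmeticFunction ℕ) : ArithmeticFunction ℂ))
        (p ^ s)) else 0 := by
    intro i
    rw [intCoe_apply, moebius_apply_prime_pow hp (Nat.succ_ne_zero i)]
    rcases eq_or_ne i 0 with rfl | hi
    · simp
    · simp [Nat.succ_ne_succ.mpr hi, hi]
  simp only [hterm]
  rw [Finset.sum_ite_eq' (Finset.range (s + 1)) 0
    (fun _ => -(((Gf f).pmul ((sigma 0 : ArithmeticFunction ℕ) : ArithmeticFunction ℂ)) (p ^ s))),
    if_pos (Finset.mem_range.mpr s.succ_pos)]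
  have h1 : ((moebius : ArithmeticFunction ℤ) : ArithmeticFunction ℂ) (p ^ 0) = 1 := by simp
  rw [h1, one_mul, Nat.sub_zero, hT, hT]
  rcases eq_or_ne s 0 with rfl | hs
  · norm_num
    ring
  · rw [if_neg hs, if_neg (Nat.succ_ne_zero s), if_pos (by omega)]
    push_cast
    ring

end LcmConvAux


open Finset in
/-- For a multiplicative function `f` and every `n ≥ 1`,
`Σ_{lcm(a,b)=n} μ(a) f(a) = ∏_{p² ∣ n} (1 - f(p)) · ∏_{p ∥ n} (1 - 2 f(p))`,
the products being over prime divisors of `n`.  In particular, if `n` is a perfect square,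
then `Σ_{d ∣ n} μ(d) f(d)` equals the lcm-convolution sum. -/
theorem lcm_convolution_moebius_mul_multiplicative (f : ℕ → ℂ) (hf0 : ∃ k, f k ≠ 0)
    (hmul : ∀ a b : ℕ, Nat.Coprime a b → f (a * b) = f a * f b) (n : ℕ) (hn : 0 < n) :
    (∑ x ∈ (n.divisors ×ˢ n.divisors).filter (fun x => Nat.lcm x.1 x.2 = n),
        ((ArithmeticFunction.moebius x.1 : ℤ) : ℂ) * f x.1 =
      (∏ p ∈ n.primeFactors.filter (fun p => p ^ 2 ∣ n), (1 - f p)) *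
        ∏ p ∈ n.primeFactors.filter (fun p => ¬ p ^ 2 ∣ n), (1 - 2 * f p)) ∧
    (IsSquare n →
      ∑ d ∈ n.divisors, ((ArithmeticFunction.moebius d : ℤ) : ℂ) * f d =
        ∑ x ∈ (n.divisors ×ˢ n.divisors).filter (fun x => Nat.lcm x.1 x.2 = n),
          ((ArithmeticFunction.moebius x.1 : ℤ) : ℂ) * f x.1) := by
  obtain ⟨k, hk⟩ := hf0
  have hf1 : f 1 = 1 :=
    mul_left_cancel₀ hk (by rw [mul_one, ← hmul k 1 (Nat.coprime_one_right k), mul_one])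
  have hS := LcmConvAux.Slcm_mult f hf1 hmul
  have key : LcmConvAux.Slcm f n =
      (∏ p ∈ n.primeFactors.filter (fun p => p ^ 2 ∣ n), (1 - f p)) *
        ∏ p ∈ n.primeFactors.filter (fun p => ¬ p ^ 2 ∣ n), (1 - 2 * f p) := by
    rw [hS.multiplicative_factorization _ hn.ne', Finsupp.prod, Nat.support_factorization,
      ← Finset.prod_ite]
    refine Finset.prod_congr rfl fun p hp => ?_
    have hpp := Nat.prime_of_mem_primeFactors hp
    have hpos := hpp.factorization_pos_of_dvd hn.ne' (Nat.dvd_of_mem_primeFactors hp)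
    rw [LcmConvAux.Slcm_prime_pow f hf1 hpp hpos.ne']
    simp only [Nat.Prime.pow_dvd_iff_le_factorization hpp hn.ne']
  refine ⟨key, fun hsq => ?_⟩
  obtain ⟨r, hr⟩ := hsq
  have hsqall : ∀ p ∈ n.primeFactors, p ^ 2 ∣ n := by
    intro p hp
    have hpp := Nat.prime_of_mem_primeFactors hp
    have hpr : p ∣ r := by
      have hd := Nat.dvd_of_mem_primeFactors hp
      rw [hr] at hd
      rcases hpp.dvd_mul.mp hd with h | h <;> exact h
    rw [hr, pow_two]
    exact mul_dvd_mul hpr hpr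
  have hfilter1 : n.primeFactors.filter (fun p => p ^ 2 ∣ n) = n.primeFactors :=
    Finset.filter_true_of_mem hsqall
  have hfilter2 : n.primeFactors.filter (fun p => ¬ p ^ 2 ∣ n) = ∅ :=
    Finset.filter_false_of_mem (fun p hp h => h (hsqall p hp))
  have hGmult : (LcmConvAux.Gf f).IsMultiplicative :=
    (ArithmeticFunction.isMultiplicative_moebius.intCast.pmul
      (LcmConvAux.Ff_mult f hf1 hmul)).mul ArithmeticFunction.isMultiplicative_zeta.natCast
  have hG : ∑ d ∈ n.divisors, ((ArithmeticFunction.moebius d : ℤ) : ℂ) * f d =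
      LcmConvAux.Gf f n := by
    rw [LcmConvAux.Gf, ArithmeticFunction.coe_mul_zeta_apply]
    refine Finset.sum_congr rfl fun d hd => ?_
    rw [ArithmeticFunction.pmul_apply, ArithmeticFunction.intCoe_apply,
      LcmConvAux.Ff_apply _ (Nat.pos_of_mem_divisors hd).ne']
  have hGn : LcmConvAux.Gf f n = ∏ p ∈ n.primeFactors, (1 - f p) := by
    rw [hGmult.multiplicative_factorization _ hn.ne', Finsupp.prod, Nat.support_factorization]
    refine Finset.prod_congr rfl fun p hp => ?_
    have hpp := Nat.prime_of_mem_primeFactors hp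
    rw [LcmConvAux.Gf_prime_pow f hf1 hpp,
      if_neg (hpp.factorization_pos_of_dvd hn.ne' (Nat.dvd_of_mem_primeFactors hp)).ne']
  calc ∑ d ∈ n.divisors, ((ArithmeticFunction.moebius d : ℤ) : ℂ) * f d
      = ∏ p ∈ n.primeFactors, (1 - f p) := by rw [hG, hGn]
    _ = (∏ p ∈ n.primeFactors.filter (fun p => p ^ 2 ∣ n), (1 - f p)) *
        ∏ p ∈ n.primeFactors.filter (fun p => ¬ p ^ 2 ∣ n), (1 - 2 * f p) := by
        rw [hfilter1, hfilter2, Finset.prod_empty, mul_one]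
    _ = _ := key.symm
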